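/- arXiv:2006.09968 — 3 statements merged into one kernel-verified Lean document; each statement's English description precedes it below -/
import Mathlib

section
/- Let p be a prime, r ≥ 1 an integer, and a₁, a₂, a₃ integers with gcd(p, a₁, a₂, a₃) = 1. Then the number of pairs (h, k) ∈ (ℤ/p^rℤ)² satisfying the simultaneous congruences a₁h + a₂k ≡ 0 (mod p^r) and a₂h + a₃k ≡ 0 (mod p^r) is at most gcd(p^r, a₁a₃ − a₂²). -/
-- count of solutions of D*x=0 in ZMod N is ≤ gcd N D
lemma lemA (N : ℕ) (hN : 0 < N) (D : ℤ) :
    Nat.card {x : ZMod N // (D : ZMod N) * x = 0} ≤ Int.gcd (N : ℤ) D := by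
  haveI : NeZero N := ⟨hN.ne'⟩
  set d := D.natAbs with hd
  set g := Nat.gcd N d with hg
  have hgpos : 0 < g := Nat.gcd_pos_of_pos_left _ hN
  have hgdvdN : g ∣ N := Nat.gcd_dvd_left _ _
  have hgdvdd : g ∣ d := Nat.gcd_dvd_right _ _
  set m := N / g with hm
  have hmg : m * g = N := Nat.div_mul_cancel hgdvdN
  have hmpos : 0 < m := Nat.div_pos (Nat.le_of_dvd hN hgdvdN) hgpos
  have key : ∀ x : ZMod N, (D : ZMod N) * x = 0 → m ∣ x.val := by
    intro x hx
    have h2 : (N : ℤ) ∣ D * (x.val : ℤ) := by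
      rw [← ZMod.intCast_zmod_eq_zero_iff_dvd]
      push_cast
      rw [ZMod.natCast_val, ZMod.cast_id, hx]
    have h3 : N ∣ d * x.val := by
      have h2' := Int.natAbs_dvd_natAbs.mpr h2
      rwa [Int.natAbs_mul, Int.natAbs_natCast, Int.natAbs_natCast] at h2'
    obtain ⟨c, hc⟩ := h3
    have h4 : m ∣ (d / g) * x.val := by
      refine ⟨c, ?_⟩
      have : (d / g) * x.val * g = m * c * g := by
        rw [mul_right_comm, Nat.div_mul_cancel hgdvdd, hc, mul_right_comm, hmg]
      exact Nat.eq_of_mul_eq_mul_right hgpos this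
    have hcop : Nat.Coprime m (d / g) := Nat.coprime_div_gcd_div_gcd hgpos
    exact hcop.dvd_of_dvd_mul_left h4
  have hlt : ∀ x : {x : ZMod N // (D : ZMod N) * x = 0}, x.1.val / m < g := by
    intro x
    rw [Nat.div_lt_iff_lt_mul hmpos]
    calc x.1.val < N := ZMod.val_lt _
      _ = g * m := by rw [← hmg, mul_comm]
  set F : {x : ZMod N // (D : ZMod N) * x = 0} → Fin g :=
    fun x => ⟨x.1.val / m, hlt x⟩ with hF
  have hFinj : Function.Injective F := by
    intro x y hxy
    have hx := Nat.div_mul_cancel (key x.1 x.2)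
    have hy := Nat.div_mul_cancel (key y.1 y.2)
    have : x.1.val = y.1.val := by
      rw [← hx, ← hy]
      simp only [hF, Fin.mk.injEq] at hxy
      rw [hxy]
    exact Subtype.ext (ZMod.val_injective N this)
  calc Nat.card {x : ZMod N // (D : ZMod N) * x = 0} ≤ Nat.card (Fin g) :=
        Nat.card_le_card_of_injective F hFinj
    _ = g := by rw [Nat.card_eq_fintype_card, Fintype.card_fin]
    _ = Int.gcd (N : ℤ) D := by simp [Int.gcd, hg, hd]

lemma unitOf {p : ℕ} (hp : p.Prime) (r : ℕ) (a : ℤ) (ha : ¬ (p : ℤ) ∣ a) :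
    IsUnit ((a : ℤ) : ZMod (p ^ r)) := by
  have hnd : ¬ p ∣ a.natAbs := fun h => ha (Int.natCast_dvd.mpr h)
  have hcop : (a.natAbs).Coprime (p ^ r) :=
    (Nat.Coprime.pow_right _ ((Nat.Prime.coprime_iff_not_dvd hp).mpr hnd).symm)
  have hu : IsUnit ((a.natAbs : ℕ) : ZMod (p ^ r)) :=
    (ZMod.isUnit_iff_coprime _ _).mpr hcop
  rcases Int.natAbs_eq a with h | h
  · rw [h, Int.cast_natCast]; exact hu
  · rw [h, Int.cast_neg, Int.cast_natCast]; exact hu.neg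

/-- Let `p` be a prime, `r ≥ 1`, and `a₁, a₂, a₃ ∈ ℤ` with
`gcd(p, a₁, a₂, a₃) = 1`. Then the number of pairs `(h, k) ∈ (ℤ/p^rℤ)²` with
`a₁h + a₂k ≡ a₂h + a₃k ≡ 0 (mod p^r)` is at most `gcd(p^r, a₁a₃ − a₂²)`. -/
theorem statement10 (p : ℕ) (hp : p.Prime) (r : ℕ) (hr : 1 ≤ r) (a₁ a₂ a₃ : ℤ)
    (hgcd : Int.gcd (Int.gcd (Int.gcd (p : ℤ) a₁) a₂) a₃ = 1) :
    Nat.card {hk : ZMod (p ^ r) × ZMod (p ^ r) //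
        (a₁ : ZMod (p ^ r)) * hk.1 + (a₂ : ZMod (p ^ r)) * hk.2 = 0 ∧
        (a₂ : ZMod (p ^ r)) * hk.1 + (a₃ : ZMod (p ^ r)) * hk.2 = 0} ≤
      Int.gcd ((p : ℤ) ^ r) (a₁ * a₃ - a₂ ^ 2) := by
  set N := p ^ r with hN
  have hNpos : 0 < N := pow_pos hp.pos r |>.trans_le (le_refl _)
  haveI : NeZero N := ⟨hNpos.ne'⟩
  set D : ℤ := a₁ * a₃ - a₂ ^ 2 with hD
  -- for any solution, D * h = 0 and D * k = 0
  have hDcast : ((D : ℤ) : ZMod N) = (a₁ : ZMod N) * a₃ - (a₂ : ZMod N) ^ 2 := by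
    push_cast [hD]; ring
  have hDh : ∀ h k : ZMod N, (a₁ : ZMod N) * h + (a₂ : ZMod N) * k = 0 →
      (a₂ : ZMod N) * h + (a₃ : ZMod N) * k = 0 → (D : ZMod N) * h = 0 := by
    intro h k e1 e2
    rw [hDcast]
    linear_combination (a₃ : ZMod N) * e1 - (a₂ : ZMod N) * e2
  have hDk : ∀ h k : ZMod N, (a₁ : ZMod N) * h + (a₂ : ZMod N) * k = 0 →
      (a₂ : ZMod N) * h + (a₃ : ZMod N) * k = 0 → (D : ZMod N) * k = 0 := by
    intro h k e1 e2
    rw [hDcast]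
    linear_combination (a₁ : ZMod N) * e2 - (a₂ : ZMod N) * e1
  -- one of a₁, a₂, a₃ is not divisible by p
  have hnot : ¬ ((p : ℤ) ∣ a₁ ∧ (p : ℤ) ∣ a₂ ∧ (p : ℤ) ∣ a₃) := by
    rintro ⟨h1, h2, h3⟩
    have : (p : ℤ) ∣ (Int.gcd (Int.gcd (Int.gcd (p : ℤ) a₁) a₂) a₃ : ℤ) :=
      Int.natCast_dvd_natCast.mpr (Int.dvd_gcd (Int.natCast_dvd_natCast.mpr (Int.dvd_gcd
        (Int.natCast_dvd_natCast.mpr (Int.dvd_gcd dvd_rfl h1)) h2)) h3)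
    rw [hgcd] at this
    exact hp.one_lt.ne' (Nat.dvd_one.mp (Int.natCast_dvd_natCast.mp this))
  set S := {x : ZMod N // (D : ZMod N) * x = 0} with hS
  have hcard : Nat.card S ≤ Int.gcd (N : ℤ) D := lemA N hNpos D
  have hgoal : Int.gcd ((p : ℤ) ^ r) (a₁ * a₃ - a₂ ^ 2) = Int.gcd (N : ℤ) D := by
    rw [hN, hD]; push_cast; rfl
  rw [hgoal]
  set T := {hk : ZMod N × ZMod N //
      (a₁ : ZMod N) * hk.1 + (a₂ : ZMod N) * hk.2 = 0 ∧
      (a₂ : ZMod N) * hk.1 + (a₃ : ZMod N) * hk.2 = 0} with hT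
  -- build an injection T → S in each case
  by_cases h1 : (p : ℤ) ∣ a₁
  · have ha1 : ∀ t : T, (D : ZMod N) * t.1.1 = 0 := fun t => hDh _ _ t.2.1 t.2.2
    by_cases h2 : (p : ℤ) ∣ a₂
    · have h3 : ¬ (p : ℤ) ∣ a₃ := fun h => hnot ⟨h1, h2, h⟩
      have hu := unitOf hp r a₃ h3
      have hinj : Function.Injective (fun t : T => (⟨t.1.1, ha1 t⟩ : S)) := by
        intro x y hxy
        simp only [Subtype.mk.injEq] at hxy
        have e1 := x.2.2; have e2 := y.2.2
        rw [hxy] at e1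
        have : (a₃ : ZMod N) * x.1.2 = (a₃ : ZMod N) * y.1.2 := by
          linear_combination e1 - e2
        exact Subtype.ext (Prod.ext hxy (hu.mul_left_cancel this))
      exact (Nat.card_le_card_of_injective _ hinj).trans hcard
    · have hu := unitOf hp r a₂ h2
      have hinj : Function.Injective (fun t : T => (⟨t.1.1, ha1 t⟩ : S)) := by
        intro x y hxy
        simp only [Subtype.mk.injEq] at hxy
        have e1 := x.2.1; have e2 := y.2.1
        rw [hxy] at e1
        have : (a₂ : ZMod N) * x.1.2 = (a₂ : ZMod N) * y.1.2 := by
          linear_combination e1 - e2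
        exact Subtype.ext (Prod.ext hxy (hu.mul_left_cancel this))
      exact (Nat.card_le_card_of_injective _ hinj).trans hcard
  · have hu := unitOf hp r a₁ h1
    have ha2 : ∀ t : T, (D : ZMod N) * t.1.2 = 0 := fun t => hDk _ _ t.2.1 t.2.2
    have hinj : Function.Injective (fun t : T => (⟨t.1.2, ha2 t⟩ : S)) := by
      intro x y hxy
      simp only [Subtype.mk.injEq] at hxy
      have e1 := x.2.1; have e2 := y.2.1
      rw [hxy] at e1
      have : (a₁ : ZMod N) * x.1.1 = (a₁ : ZMod N) * y.1.1 := by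
        linear_combination e1 - e2
      exact Subtype.ext (Prod.ext (hu.mul_left_cancel this) hxy)
    exact (Nat.card_le_card_of_injective _ hinj).trans hcard
end

section
/- Let q ∈ ℕ and let s ≥ 2 be a real number. Then Σ_{1 ≤ a₁,a₂,a₃ ≤ q, gcd(q,a₁,a₂,a₃)=1} gcd(q, a₁a₃ − a₂²)^{s/2} ≤ τ(q)² q^{s/2 + 2}, where τ(q) is the number of positive divisors of q. -/
open scoped BigOperators

lemma aux_count (q m : ℕ) (hm : 0 < m) (hmq : m ∣ q) (r : ℤ) :
    ((Finset.Icc 1 q).filter (fun a : ℕ => (m:ℤ) ∣ (a:ℤ) - r)).card ≤ q / m := by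
  have key : ∀ a ∈ (Finset.Icc 1 q).filter (fun a : ℕ => (m:ℤ) ∣ (a:ℤ) - r),
      ∀ b ∈ (Finset.Icc 1 q).filter (fun a : ℕ => (m:ℤ) ∣ (a:ℤ) - r),
      a ≤ b → (a-1)/m = (b-1)/m → a = b := by
    intro a ha b hb hab heq
    simp only [Finset.mem_filter, Finset.mem_Icc] at ha hb
    have hd : (m:ℤ) ∣ (b:ℤ) - a := by
      have := dvd_sub hb.2 ha.2
      simpa using this
    have hd' : m ∣ b - a := by
      have : ((b - a : ℕ) : ℤ) = (b:ℤ) - a := by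
        push_cast [Nat.cast_sub hab]; ring
      exact_mod_cast this ▸ hd
    obtain ⟨t, ht⟩ := hd'
    have hb1 : b - 1 = (a - 1) + m * t := by omega
    rw [hb1, Nat.add_mul_div_left _ _ hm] at heq
    have ht0 : t = 0 := by linarith
    rw [ht0, mul_zero] at ht
    omega
  have := Finset.card_le_card_of_injOn (fun a => (a-1)/m)
    (s := (Finset.Icc 1 q).filter (fun a : ℕ => (m:ℤ) ∣ (a:ℤ) - r))
    (t := Finset.range (q/m)) ?_ ?_
  · simpa using this
  · intro a ha
    simp only [Finset.mem_coe, Finset.mem_filter, Finset.mem_Icc] at ha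
    simp only [Finset.mem_coe, Finset.mem_range]
    rw [Nat.div_lt_iff_lt_mul hm, Nat.div_mul_cancel hmq]
    omega
  · intro a ha b hb heq
    rcases le_total a b with h | h
    · exact key a ha b hb h heq
    · exact (key b hb a ha h heq.symm).symm

lemma aux_gcd_sum (q d : ℕ) (hd : 0 < d) :
    ∑ a ∈ Finset.Icc 1 q, Nat.gcd a d ≤ d.divisors.card * q := by
  calc ∑ a ∈ Finset.Icc 1 q, Nat.gcd a d
      ≤ ∑ a ∈ Finset.Icc 1 q, ∑ e ∈ d.divisors.filter (· ∣ a), e := by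
        refine Finset.sum_le_sum fun a _ => ?_
        refine Finset.single_le_sum (f := fun e => e) (fun i _ => Nat.zero_le i) ?_
        simp only [Finset.mem_filter, Nat.mem_divisors]
        exact ⟨⟨Nat.gcd_dvd_right a d, hd.ne'⟩, Nat.gcd_dvd_left a d⟩
    _ = ∑ e ∈ d.divisors, ((Finset.Icc 1 q).filter (e ∣ ·)).card * e := by
        simp_rw [Finset.sum_filter]
        rw [Finset.sum_comm]
        refine Finset.sum_congr rfl fun e _ => ?_
        rw [← Finset.sum_filter, Finset.sum_const, smul_eq_mul]
    _ ≤ ∑ _e ∈ d.divisors, q := by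
        refine Finset.sum_le_sum fun e he => ?_
        have : (Finset.Icc 1 q).filter (e ∣ ·) = (Finset.Ioc 0 q).filter (e ∣ ·) := by
          rw [← Finset.Icc_add_one_left_eq_Ioc, zero_add]
        rw [this, Nat.Ioc_filter_dvd_card_eq_div]
        exact Nat.div_mul_le_self q e
    _ = d.divisors.card * q := by rw [Finset.sum_const, smul_eq_mul]

lemma aux_inner (q d a₂ b : ℕ) (hdq : d ∣ q) (hd : 0 < d) :
    ((Finset.Icc 1 q).filter
        (fun x : ℕ => (d:ℤ) ∣ ((b:ℤ) * (x:ℤ) - (a₂:ℤ)^2))).card * d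
      ≤ q * Nat.gcd b d := by
  set S := (Finset.Icc 1 q).filter
      (fun x : ℕ => (d:ℤ) ∣ ((b:ℤ) * (x:ℤ) - (a₂:ℤ)^2)) with hS
  set e := Nat.gcd b d with he
  have he0 : 0 < e := Nat.gcd_pos_of_pos_right _ hd
  set m := d / e with hm
  have hed : e ∣ d := Nat.gcd_dvd_right _ _
  have hea : e ∣ b := Nat.gcd_dvd_left _ _
  have hdm : e * m = d := Nat.mul_div_cancel' hed
  have hm0 : 0 < m := Nat.div_pos (Nat.le_of_dvd hd hed) he0
  have hmd : m ∣ d := Nat.div_dvd_of_dvd hed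
  have hmq : m ∣ q := hmd.trans hdq
  rcases S.eq_empty_or_nonempty with hemp | ⟨a₀, ha₀⟩
  · simp [hemp]
  · have hsub : S ⊆ (Finset.Icc 1 q).filter (fun a : ℕ => (m:ℤ) ∣ (a:ℤ) - (a₀:ℤ)) := by
      intro a ha
      simp only [hS, Finset.mem_filter] at ha ha₀ ⊢
      refine ⟨ha.1, ?_⟩
      have hdvd : (d:ℤ) ∣ ((a:ℤ) - a₀) * b := by
        have := dvd_sub ha.2 ha₀.2
        have h2 : ((b:ℤ) * a - a₂^2) - ((b:ℤ) * a₀ - a₂^2) = ((a:ℤ) - a₀) * b := by ring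
        rwa [h2] at this
      set f := b / e with hf
      have hfa : e * f = b := Nat.mul_div_cancel' hea
      have h3 : ((e:ℤ) * m) ∣ (e:ℤ) * (((a:ℤ) - a₀) * f) := by
        have : ((a:ℤ) - a₀) * b = (e:ℤ) * (((a:ℤ) - a₀) * f) := by
          rw [← hfa]; push_cast; ring
        rw [← this]
        exact_mod_cast (by exact_mod_cast hdm ▸ hdvd : ((e*m : ℕ):ℤ) ∣ ((a:ℤ) - a₀) * b)
      have h4 : (m:ℤ) ∣ ((a:ℤ) - a₀) * f :=
        (mul_dvd_mul_iff_left (by exact_mod_cast he0.ne' : (e:ℤ) ≠ 0)).mp h3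
      have hcop : IsCoprime (m:ℤ) (f:ℤ) := by
        rw [Nat.isCoprime_iff_coprime]
        exact (Nat.coprime_div_gcd_div_gcd (he ▸ he0)).symm
      exact hcop.dvd_of_dvd_mul_right h4
    calc S.card * d ≤ (q / m) * d := by
          have := (Finset.card_le_card hsub).trans (aux_count q m hm0 hmq (a₀:ℤ))
          exact Nat.mul_le_mul_right d this
      _ = q * e := by
          rw [← hdm, mul_comm e m, ← mul_assoc, Nat.div_mul_cancel hmq]
      _ = q * Nat.gcd b d := rfl

/-- For `q ≥ 1` and real `s ≥ 2`,
`Σ_{1 ≤ a₁,a₂,a₃ ≤ q, gcd(q,a₁,a₂,a₃)=1} gcd(q, a₁a₃ − a₂²)^{s/2} ≤ τ(q)² q^{s/2+2}`,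
where `τ(q)` is the number of positive divisors of `q`. -/
theorem statement11 (q : ℕ) (hq : 0 < q) (s : ℝ) (hs : 2 ≤ s) :
    (∑ a₁ ∈ Finset.Icc 1 q, ∑ a₂ ∈ Finset.Icc 1 q, ∑ a₃ ∈ Finset.Icc 1 q,
        if Nat.gcd (Nat.gcd (Nat.gcd q a₁) a₂) a₃ = 1 then
          ((Int.gcd (q : ℤ) ((a₁ : ℤ) * (a₃ : ℤ) - (a₂ : ℤ) ^ 2) : ℝ)) ^ (s / 2)
        else 0) ≤
      (q.divisors.card : ℝ) ^ 2 * (q : ℝ) ^ (s / 2 + 2) := by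
  have hq0 : (0:ℝ) < q := by exact_mod_cast hq
  have hs2 : (0:ℝ) ≤ s/2 - 1 := by linarith
  set I := Finset.Icc 1 q with hI
  set f : ℕ → ℕ → ℕ → ℕ → ℝ := fun d a₁ a₂ a₃ =>
    if (d:ℤ) ∣ ((a₁:ℤ) * (a₃:ℤ) - (a₂:ℤ)^2) then (d:ℝ) ^ (s/2) else 0 with hf
  have hfnn : ∀ d a₁ a₂ a₃, 0 ≤ f d a₁ a₂ a₃ := by
    intro d a₁ a₂ a₃
    simp only [hf]
    split
    · exact Real.rpow_nonneg (Nat.cast_nonneg d) _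
    · exact le_rfl
  -- Step 1: pointwise bound by sum over divisors
  have step1 : ∀ a₁ a₂ a₃ : ℕ,
      (if Nat.gcd (Nat.gcd (Nat.gcd q a₁) a₂) a₃ = 1 then
          ((Int.gcd (q : ℤ) ((a₁ : ℤ) * (a₃ : ℤ) - (a₂ : ℤ) ^ 2) : ℝ)) ^ (s / 2)
        else 0) ≤ ∑ d ∈ q.divisors, f d a₁ a₂ a₃ := by
    intro a₁ a₂ a₃
    split
    · set g := Int.gcd (q:ℤ) ((a₁:ℤ) * (a₃:ℤ) - (a₂:ℤ)^2) with hg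
      have hgq : g ∣ q := by
        have h : (g:ℤ) ∣ (q:ℤ) := Int.gcd_dvd_left _ _
        exact Int.natCast_dvd_natCast.mp h
      have hgmem : g ∈ q.divisors := Nat.mem_divisors.mpr ⟨hgq, hq.ne'⟩
      have hgd : (g:ℤ) ∣ ((a₁:ℤ) * (a₃:ℤ) - (a₂:ℤ)^2) := Int.gcd_dvd_right _ _
      have := Finset.single_le_sum (f := fun d => f d a₁ a₂ a₃)
        (fun i _ => hfnn i a₁ a₂ a₃) hgmem
      simpa [hf, hgd] using this
    · exact Finset.sum_nonneg fun i _ => hfnn i a₁ a₂ a₃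
  -- Step 2: bound of each d-slice
  have slice : ∀ d ∈ q.divisors,
      (∑ a₁ ∈ I, ∑ a₂ ∈ I, ∑ a₃ ∈ I, f d a₁ a₂ a₃)
        ≤ (q.divisors.card : ℝ) * (q:ℝ) ^ (s/2 + 2) := by
    intro d hd
    obtain ⟨hdq, -⟩ := Nat.mem_divisors.mp hd
    have hd0 : 0 < d := Nat.pos_of_mem_divisors hd
    have hd0' : (0:ℝ) < d := by exact_mod_cast hd0
    have hdle : (d:ℝ) ≤ q := by exact_mod_cast Nat.le_of_dvd hq hdq
    have hqs : (0:ℝ) ≤ (q:ℝ) ^ (s/2-1) := Real.rpow_nonneg hq0.le _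
    have inner3 : ∀ a₁ a₂ : ℕ, (∑ a₃ ∈ I, f d a₁ a₂ a₃)
        ≤ ((q:ℝ) * (Nat.gcd a₁ d : ℝ)) * (q:ℝ) ^ (s/2-1) := by
      intro a₁ a₂
      have hcount := aux_inner q d a₂ a₁ hdq hd0
      set c := ((Finset.Icc 1 q).filter
        (fun x : ℕ => (d:ℤ) ∣ ((a₁:ℤ) * (x:ℤ) - (a₂:ℤ)^2))).card with hc
      have hsum : (∑ a₃ ∈ I, f d a₁ a₂ a₃) = (c:ℝ) * (d:ℝ) ^ (s/2) := by
        rw [hf, hI, ← Finset.sum_filter, Finset.sum_const, nsmul_eq_mul]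
      have hds : (d:ℝ) ^ (s/2) = (d:ℝ) * (d:ℝ) ^ (s/2-1) := by
        nth_rewrite 1 [show s/2 = 1 + (s/2-1) by ring]
        rw [Real.rpow_add hd0', Real.rpow_one]
      calc (∑ a₃ ∈ I, f d a₁ a₂ a₃) = ((c * d : ℕ):ℝ) * (d:ℝ) ^ (s/2-1) := by
            rw [hsum, hds]; push_cast; ring
        _ ≤ ((q * Nat.gcd a₁ d : ℕ):ℝ) * (d:ℝ) ^ (s/2-1) := by
            refine mul_le_mul_of_nonneg_right ?_ (Real.rpow_nonneg hd0'.le _)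
            exact_mod_cast hcount
        _ ≤ ((q:ℝ) * (Nat.gcd a₁ d : ℝ)) * (q:ℝ) ^ (s/2-1) := by
            push_cast
            refine mul_le_mul_of_nonneg_left
              (Real.rpow_le_rpow hd0'.le hdle hs2) ?_
            positivity
    have hcardI : (I.card : ℝ) = q := by simp [hI]
    have inner2 : ∀ a₁ : ℕ, (∑ a₂ ∈ I, ∑ a₃ ∈ I, f d a₁ a₂ a₃)
        ≤ (q:ℝ) * (((q:ℝ) * (Nat.gcd a₁ d : ℝ)) * (q:ℝ) ^ (s/2-1)) := by
      intro a₁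
      calc (∑ a₂ ∈ I, ∑ a₃ ∈ I, f d a₁ a₂ a₃)
          ≤ ∑ _a₂ ∈ I, ((q:ℝ) * (Nat.gcd a₁ d : ℝ)) * (q:ℝ) ^ (s/2-1) :=
            Finset.sum_le_sum fun a₂ _ => inner3 a₁ a₂
        _ = (q:ℝ) * (((q:ℝ) * (Nat.gcd a₁ d : ℝ)) * (q:ℝ) ^ (s/2-1)) := by
            rw [Finset.sum_const, nsmul_eq_mul, hcardI]
    have hgsum : ((∑ a ∈ I, Nat.gcd a d : ℕ) : ℝ) ≤ (q.divisors.card : ℝ) * q := by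
      have h1 := aux_gcd_sum q d hd0
      have h2 : d.divisors.card ≤ q.divisors.card :=
        Finset.card_le_card (Nat.divisors_subset_of_dvd hq.ne' hdq)
      have : (∑ a ∈ I, Nat.gcd a d) ≤ q.divisors.card * q :=
        h1.trans (Nat.mul_le_mul_right q h2)
      exact_mod_cast this
    have hq3 : (q:ℝ) ^ (s/2+2) = (q:ℝ) ^ (s/2-1) * ((q:ℝ) * (q:ℝ) * (q:ℝ)) := by
      rw [show s/2+2 = (s/2-1) + 3 by ring, Real.rpow_add hq0]
      congr 1
      rw [show (3:ℝ) = ((3:ℕ):ℝ) by norm_num, Real.rpow_natCast]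
      ring
    calc (∑ a₁ ∈ I, ∑ a₂ ∈ I, ∑ a₃ ∈ I, f d a₁ a₂ a₃)
        ≤ ∑ a₁ ∈ I, (q:ℝ) * (((q:ℝ) * (Nat.gcd a₁ d : ℝ)) * (q:ℝ) ^ (s/2-1)) :=
          Finset.sum_le_sum fun a₁ _ => inner2 a₁
      _ = (q:ℝ) * (q:ℝ) * (q:ℝ) ^ (s/2-1) * ((∑ a ∈ I, Nat.gcd a d : ℕ) : ℝ) := by
          rw [Nat.cast_sum, Finset.mul_sum]
          refine Finset.sum_congr rfl fun a _ => ?_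
          ring
      _ ≤ (q:ℝ) * (q:ℝ) * (q:ℝ) ^ (s/2-1) * ((q.divisors.card : ℝ) * q) := by
          refine mul_le_mul_of_nonneg_left hgsum ?_
          positivity
      _ = (q.divisors.card : ℝ) * (q:ℝ) ^ (s/2 + 2) := by
          rw [hq3]; ring
  -- Step 3: assemble
  calc (∑ a₁ ∈ I, ∑ a₂ ∈ I, ∑ a₃ ∈ I,
        if Nat.gcd (Nat.gcd (Nat.gcd q a₁) a₂) a₃ = 1 then
          ((Int.gcd (q : ℤ) ((a₁ : ℤ) * (a₃ : ℤ) - (a₂ : ℤ) ^ 2) : ℝ)) ^ (s / 2)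
        else 0)
      ≤ ∑ a₁ ∈ I, ∑ a₂ ∈ I, ∑ a₃ ∈ I, ∑ d ∈ q.divisors, f d a₁ a₂ a₃ := by
        refine Finset.sum_le_sum fun a₁ _ => Finset.sum_le_sum fun a₂ _ =>
          Finset.sum_le_sum fun a₃ _ => step1 a₁ a₂ a₃
    _ = ∑ d ∈ q.divisors, ∑ a₁ ∈ I, ∑ a₂ ∈ I, ∑ a₃ ∈ I, f d a₁ a₂ a₃ := by
        simp_rw [Finset.sum_comm (s := I) (t := q.divisors)]
    _ ≤ ∑ _d ∈ q.divisors, (q.divisors.card : ℝ) * (q:ℝ) ^ (s/2 + 2) :=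
        Finset.sum_le_sum slice
    _ = (q.divisors.card : ℝ) ^ 2 * (q : ℝ) ^ (s / 2 + 2) := by
        rw [Finset.sum_const, nsmul_eq_mul]; ring
end

section
/- For every s ∈ ℕ there is a constant C_s such that for all N ≥ 1 and every measurable set 𝔅 ⊆ 𝕋³, one has ∫_𝔅 sup_{ξ,η ∈ 𝕋} |S_N(α; ξ, η)|^{2s} dα ≤ C_s N² ∫_𝔅 ∫_{𝕋²} |S_N(α; ξ, η)|^{2s} dξ dη dα. -/
open scoped BigOperators ENNReal NNReal
open MeasureTheory

/-- `e(t) = e^{2πit}`. -/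
noncomputable def e (t : ℝ) : ℂ := Complex.exp (2 * Real.pi * Complex.I * t)

lemma e_add (a b : ℝ) : e (a + b) = e a * e b := by
  simp only [e, Complex.ofReal_add, mul_add, Complex.exp_add]

lemma continuous_e : Continuous e := by
  unfold e; fun_prop

lemma e_norm (t : ℝ) : ‖e t‖ = 1 := by
  simp only [e, Complex.norm_exp]
  have : (2 * ↑Real.pi * Complex.I * ↑t).re = 0 := by simp [Complex.mul_re]
  rw [this, Real.exp_zero]

lemma e_sum {ι : Type*} (s : Finset ι) (f : ι → ℝ) : e (∑ i ∈ s, f i) = ∏ i ∈ s, e (f i) := by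
  classical
  induction s using Finset.induction with
  | empty => simp [e]
  | insert _ _ h ih => rw [Finset.sum_insert h, e_add, ih, Finset.prod_insert h]

lemma conj_e (t : ℝ) : (starRingEnd ℂ) (e t) = e (-t) := by
  simp only [e, ← Complex.exp_conj, map_mul, Complex.conj_I, Complex.conj_ofReal]
  congr 1
  rw [show ((2:ℂ)) = ((2:ℝ):ℂ) by norm_num, Complex.conj_ofReal]
  push_cast
  ring

lemma integral_e (k : ℤ) : (∫ t in Set.Icc (0:ℝ) 1, e (k * t)) = if k = 0 then 1 else 0 := by
  have h1 : (∫ t in Set.Icc (0:ℝ) 1, e (k * t)) = ∫ t in (0:ℝ)..1, e (k * t) := by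
    rw [MeasureTheory.integral_Icc_eq_integral_Ioc, intervalIntegral.integral_of_le zero_le_one]
  rw [h1]
  by_cases hk : k = 0
  · simp [hk, e]
  · have hc : (2 * Real.pi * Complex.I * k) ≠ 0 := by
      simp [Real.pi_ne_zero, Complex.I_ne_zero, hk]
    have h2 : ∀ t : ℝ, e (k * t) = Complex.exp ((2 * Real.pi * Complex.I * k) * t) := by
      intro t; unfold e; push_cast; ring_nf
    simp only [h2]
    rw [integral_exp_mul_complex hc]
    simp only [hk, if_false]
    have h3 : Complex.exp (2 * ↑Real.pi * Complex.I * ↑k * (1:ℝ)) = 1 := by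
      push_cast
      rw [mul_one]
      have := Complex.exp_int_mul_two_pi_mul_I k
      rw [← this]; ring_nf
    have h4 : Complex.exp (2 * ↑Real.pi * Complex.I * ↑k * ((0:ℝ):ℂ)) = 1 := by
      push_cast; simp
    rw [h3, h4]
    simp

lemma integrableOn_e_comb (c : ℝ) (m : ℝ) :
    IntegrableOn (fun t : ℝ => e (c + t * m)) (Set.Icc 0 1) volume := by
  exact (continuous_e.comp (by continuity)).integrableOn_Icc

lemma integral_e_comb (c : ℝ) (m : ℤ) :
    (∫ t in Set.Icc (0:ℝ) 1, e (c + t * m)) = e c * (if m = 0 then 1 else 0) := by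
  have : ∀ t : ℝ, e (c + t * m) = e c * e (m * t) := by
    intro t; rw [← e_add]; ring_nf
  simp only [this]
  rw [MeasureTheory.integral_const_mul, integral_e]

lemma mul_conj_e (z : ℂ) : z * (starRingEnd ℂ) z = ((‖z‖ ^ 2 : ℝ) : ℂ) := by
  rw [Complex.mul_conj]
  norm_cast
  rw [Complex.normSq_eq_norm_sq]

lemma parseval (B : Finset (ℤ × ℤ)) (a : ℤ × ℤ → ℂ) :
    (∫ ξ in Set.Icc (0:ℝ) 1, ∫ η in Set.Icc (0:ℝ) 1,
      ‖∑ q ∈ B, a q * e (ξ * q.1 + η * q.2)‖ ^ 2)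
    = ∑ q ∈ B, ‖a q‖ ^ 2 := by
  classical
  set G : ℝ → ℝ → ℂ := fun ξ η => ∑ q ∈ B, a q * e (ξ * q.1 + η * q.2) with hG
  have e_mul : ∀ u v : ℝ, e u * e v = e (u + v) := fun u v => (e_add u v).symm
  have expand : ∀ ξ η : ℝ, G ξ η * (starRingEnd ℂ) (G ξ η)
      = ∑ q ∈ B, ∑ q' ∈ B, (a q * (starRingEnd ℂ) (a q')) *
          (e (ξ * ((q.1 - q'.1 : ℤ) : ℝ)) * e (η * ((q.2 - q'.2 : ℤ) : ℝ))) := by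
    intro ξ η
    rw [hG]
    simp only [map_sum, map_mul, conj_e]
    rw [Finset.sum_mul_sum]
    refine Finset.sum_congr rfl fun q _ => Finset.sum_congr rfl fun q' _ => ?_
    rw [mul_mul_mul_comm, e_mul, e_mul]
    congr 2
    push_cast
    ring
  have cont_term : ∀ (q q' : ℤ × ℤ) (ξ : ℝ), Continuous (fun η : ℝ =>
      (a q * (starRingEnd ℂ) (a q')) *
        (e (ξ * ((q.1 - q'.1 : ℤ) : ℝ)) * e (η * ((q.2 - q'.2 : ℤ) : ℝ)))) := by
    intro q q' ξ
    exact continuous_const.mul (continuous_const.mul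
      (continuous_e.comp (continuous_id.mul continuous_const)))
  have inner_int : ∀ ξ : ℝ, (∫ η in Set.Icc (0:ℝ) 1, G ξ η * (starRingEnd ℂ) (G ξ η))
      = ∑ q ∈ B, ∑ q' ∈ B, (a q * (starRingEnd ℂ) (a q')) *
          (e (ξ * ((q.1 - q'.1 : ℤ) : ℝ)) * (if (q.2 - q'.2 : ℤ) = 0 then 1 else 0)) := by
    intro ξ
    simp only [expand]
    have hint1 : ∀ q ∈ B, IntegrableOn (fun η : ℝ => ∑ q' ∈ B,
        (a q * (starRingEnd ℂ) (a q')) *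
          (e (ξ * ((q.1 - q'.1 : ℤ) : ℝ)) * e (η * ((q.2 - q'.2 : ℤ) : ℝ))))
        (Set.Icc 0 1) volume := by
      intro q _
      exact (continuous_finset_sum _ (fun q' _ => cont_term q q' ξ)).integrableOn_Icc
    rw [MeasureTheory.integral_finset_sum _ hint1]
    refine Finset.sum_congr rfl fun q _ => ?_
    rw [MeasureTheory.integral_finset_sum _ (fun q' _ => (cont_term q q' ξ).integrableOn_Icc)]
    refine Finset.sum_congr rfl fun q' _ => ?_
    have hterm : ∀ η : ℝ, (a q * (starRingEnd ℂ) (a q')) *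
        (e (ξ * ((q.1 - q'.1 : ℤ) : ℝ)) * e (η * ((q.2 - q'.2 : ℤ) : ℝ)))
        = ((a q * (starRingEnd ℂ) (a q')) * e (ξ * ((q.1 - q'.1 : ℤ) : ℝ))) *
            e (((q.2 - q'.2 : ℤ) : ℝ) * η) := by
      intro η
      rw [mul_comm η ((q.2 - q'.2 : ℤ) : ℝ)]; ring
    simp only [hterm]
    rw [MeasureTheory.integral_const_mul, integral_e, mul_assoc]
  have cont_term2 : ∀ (q q' : ℤ × ℤ), Continuous (fun ξ : ℝ =>
      (a q * (starRingEnd ℂ) (a q')) *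
        (e (ξ * ((q.1 - q'.1 : ℤ) : ℝ)) * (if (q.2 - q'.2 : ℤ) = 0 then 1 else 0))) := by
    intro q q'
    exact continuous_const.mul ((continuous_e.comp
      (continuous_id.mul continuous_const)).mul continuous_const)
  have outer_int :
      (∫ ξ in Set.Icc (0:ℝ) 1, ∫ η in Set.Icc (0:ℝ) 1, G ξ η * (starRingEnd ℂ) (G ξ η))
      = ∑ q ∈ B, a q * (starRingEnd ℂ) (a q) := by
    rw [MeasureTheory.integral_congr_ae (Filter.Eventually.of_forall inner_int)]
    have hint2 : ∀ q ∈ B, IntegrableOn (fun ξ : ℝ => ∑ q' ∈ B,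
        (a q * (starRingEnd ℂ) (a q')) *
          (e (ξ * ((q.1 - q'.1 : ℤ) : ℝ)) * (if (q.2 - q'.2 : ℤ) = 0 then 1 else 0)))
        (Set.Icc 0 1) volume := by
      intro q _
      exact (continuous_finset_sum _ (fun q' _ => cont_term2 q q')).integrableOn_Icc
    rw [MeasureTheory.integral_finset_sum _ hint2]
    refine Finset.sum_congr rfl fun q hq => ?_
    rw [MeasureTheory.integral_finset_sum _ (fun q' _ => (cont_term2 q q').integrableOn_Icc)]
    have key : ∀ q' ∈ B, (∫ ξ in Set.Icc (0:ℝ) 1,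
        (a q * (starRingEnd ℂ) (a q')) *
          (e (ξ * ((q.1 - q'.1 : ℤ) : ℝ)) * (if (q.2 - q'.2 : ℤ) = 0 then 1 else 0)))
        = if q' = q then a q * (starRingEnd ℂ) (a q) else 0 := by
      intro q' _
      by_cases h2 : (q.2 - q'.2 : ℤ) = 0
      · have hterm : ∀ ξ : ℝ, (a q * (starRingEnd ℂ) (a q')) *
            (e (ξ * ((q.1 - q'.1 : ℤ) : ℝ)) * (if (q.2 - q'.2 : ℤ) = 0 then (1:ℂ) else 0))
            = (a q * (starRingEnd ℂ) (a q')) * e (((q.1 - q'.1 : ℤ) : ℝ) * ξ) := by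
          intro ξ
          rw [if_pos h2, mul_one, mul_comm ξ ((q.1 - q'.1 : ℤ) : ℝ)]
        simp only [hterm]
        rw [MeasureTheory.integral_const_mul, integral_e]
        by_cases h1 : (q.1 - q'.1 : ℤ) = 0
        · have e1 : q'.1 = q.1 := by omega
          have e2 : q'.2 = q.2 := by omega
          have hqq : q' = q := Prod.ext e1 e2
          simp [h1, hqq]
        · have hqq : ¬ (q' = q) := by
            intro h; subst h; omega
          simp [h1, hqq]
      · have hqq : ¬ (q' = q) := by
          intro h; subst h; omega
        simp [h2, hqq]
    rw [Finset.sum_congr rfl key, Finset.sum_ite_eq' B q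
      (fun _ => a q * (starRingEnd ℂ) (a q)), if_pos hq]
  have coe_eq : ((∫ ξ in Set.Icc (0:ℝ) 1, ∫ η in Set.Icc (0:ℝ) 1, ‖G ξ η‖ ^ 2 : ℝ) : ℂ)
      = ((∑ q ∈ B, ‖a q‖ ^ 2 : ℝ) : ℂ) := by
    have hre : ∀ ξ : ℝ, ((∫ η in Set.Icc (0:ℝ) 1, ‖G ξ η‖ ^ 2 : ℝ) : ℂ)
        = ∫ η in Set.Icc (0:ℝ) 1, G ξ η * (starRingEnd ℂ) (G ξ η) := by
      intro ξ
      calc ((∫ η in Set.Icc (0:ℝ) 1, ‖G ξ η‖ ^ 2 : ℝ) : ℂ)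
          = ∫ η in Set.Icc (0:ℝ) 1, ((‖G ξ η‖ ^ 2 : ℝ) : ℂ) := integral_ofReal.symm
        _ = ∫ η in Set.Icc (0:ℝ) 1, G ξ η * (starRingEnd ℂ) (G ξ η) :=
            MeasureTheory.integral_congr_ae (Filter.Eventually.of_forall
              (fun η => (mul_conj_e (G ξ η)).symm))
    calc ((∫ ξ in Set.Icc (0:ℝ) 1, ∫ η in Set.Icc (0:ℝ) 1, ‖G ξ η‖ ^ 2 : ℝ) : ℂ)
        = ∫ ξ in Set.Icc (0:ℝ) 1, ((∫ η in Set.Icc (0:ℝ) 1, ‖G ξ η‖ ^ 2 : ℝ) : ℂ) :=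
          integral_ofReal.symm
      _ = ∫ ξ in Set.Icc (0:ℝ) 1, ∫ η in Set.Icc (0:ℝ) 1, G ξ η * (starRingEnd ℂ) (G ξ η) :=
          MeasureTheory.integral_congr_ae (Filter.Eventually.of_forall hre)
      _ = ∑ q ∈ B, a q * (starRingEnd ℂ) (a q) := outer_int
      _ = ((∑ q ∈ B, ‖a q‖ ^ 2 : ℝ) : ℂ) := by
          rw [Finset.sum_congr rfl (fun q _ => mul_conj_e (a q))]
          norm_cast
  have goal_eq : (∫ ξ in Set.Icc (0:ℝ) 1, ∫ η in Set.Icc (0:ℝ) 1, ‖G ξ η‖ ^ 2 : ℝ)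
      = ∑ q ∈ B, ‖a q‖ ^ 2 := by exact_mod_cast coe_eq
  exact goal_eq

-- Exponential sum `S_N(α; ξ, η) = Σ_{|x| ≤ N, |y| ≤ N} e(α·φ(x,y) + ξx + ηy)`.
open Classical in
noncomputable def SN (N : ℝ) (α : Fin 3 → ℝ) (ξ η : ℝ) : ℂ :=
  ∑' x : ℤ, ∑' y : ℤ,
    if |(x : ℝ)| ≤ N ∧ |(y : ℝ)| ≤ N then
      e (α 0 * (x : ℝ) ^ 2 + α 1 * (2 * (x : ℝ) * (y : ℝ)) + α 2 * (y : ℝ) ^ 2 +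
        ξ * x + η * y)
    else 0

noncomputable def coef (α : Fin 3 → ℝ) (p : ℤ × ℤ) : ℂ :=
  e (α 0 * (p.1 : ℝ) ^ 2 + α 1 * (2 * (p.1 : ℝ) * (p.2 : ℝ)) + α 2 * (p.2 : ℝ) ^ 2)

lemma SN_eq (N : ℝ) (α : Fin 3 → ℝ) (ξ η : ℝ) :
    SN N α ξ η = ∑ p ∈ Finset.Icc (-⌊N⌋) ⌊N⌋ ×ˢ Finset.Icc (-⌊N⌋) ⌊N⌋,
      coef α p * e (ξ * p.1 + η * p.2) := by
  classical
  have hmem : ∀ x : ℤ, |(x:ℝ)| ≤ N ↔ x ∈ Finset.Icc (-⌊N⌋) ⌊N⌋ := by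
    intro x
    rw [Finset.mem_Icc, abs_le]
    constructor
    · rintro ⟨h1, h2⟩
      refine ⟨?_, Int.le_floor.2 h2⟩
      have : (-x : ℤ) ≤ ⌊N⌋ := Int.le_floor.2 (by push_cast; linarith)
      omega
    · rintro ⟨h1, h2⟩
      have l2 : (x:ℝ) ≤ N := Int.le_floor.1 h2
      have l1 : ((-x : ℤ):ℝ) ≤ N := Int.le_floor.1 (by omega)
      push_cast at l1
      constructor <;> linarith
  unfold SN
  rw [tsum_eq_sum (s := Finset.Icc (-⌊N⌋) ⌊N⌋) ?h1]
  case h1 =>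
    intro x hx
    have hx' : ¬ |(x:ℝ)| ≤ N := fun h => hx ((hmem x).1 h)
    simp [hx']
  rw [Finset.sum_product]
  refine Finset.sum_congr rfl fun x hx => ?_
  rw [tsum_eq_sum (s := Finset.Icc (-⌊N⌋) ⌊N⌋) ?h2]
  case h2 =>
    intro y hy
    have hy' : ¬ |(y:ℝ)| ≤ N := fun h => hy ((hmem y).1 h)
    simp [hy']
  refine Finset.sum_congr rfl fun y hy => ?_
  rw [if_pos ⟨(hmem x).2 hx, (hmem y).2 hy⟩]
  show _ = coef α (x, y) * e (ξ * ((x : ℤ) : ℝ) + η * ((y : ℤ) : ℝ))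
  unfold coef
  rw [← e_add]
  congr 1
  ring

lemma pointwise_bound (s : ℕ) (hs : 1 ≤ s) (N : ℝ) (hN : 1 ≤ N) (α : Fin 3 → ℝ) (ξ₀ η₀ : ℝ) :
    ‖SN N α ξ₀ η₀‖ ^ (2 * s) ≤ (3 * s * N) ^ 2 *
      ∫ ξ in Set.Icc (0:ℝ) 1, ∫ η in Set.Icc (0:ℝ) 1, ‖SN N α ξ η‖ ^ (2 * s) := by
  classical
  set n : ℤ := ⌊N⌋ with hn
  have hn1 : 1 ≤ n := Int.le_floor.2 (by exact_mod_cast hN)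
  have hnN : (n : ℝ) ≤ N := Int.floor_le N
  set A : Finset (ℤ × ℤ) := Finset.Icc (-n) n ×ˢ Finset.Icc (-n) n with hA
  set key : (Fin s → ℤ × ℤ) → ℤ × ℤ := fun g => (∑ i, (g i).1, ∑ i, (g i).2) with hkey
  set B : Finset (ℤ × ℤ) := Finset.Icc (-(s * n)) (s * n) ×ˢ Finset.Icc (-(s * n)) (s * n)
    with hB
  set D : Finset (Fin s → ℤ × ℤ) := Fintype.piFinset (fun _ => A) with hD
  set a : ℤ × ℤ → ℂ := fun q => ∑ g ∈ D.filter (fun g => key g = q), ∏ i, coef α (g i)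
    with ha
  have hmaps : ∀ g ∈ D, key g ∈ B := by
    intro g hg
    rw [hD, Fintype.mem_piFinset] at hg
    have h1 : ∀ i : Fin s, -n ≤ (g i).1 ∧ (g i).1 ≤ n := by
      intro i
      have := hg i
      rw [hA, Finset.mem_product, Finset.mem_Icc, Finset.mem_Icc] at this
      exact this.1
    have h2 : ∀ i : Fin s, -n ≤ (g i).2 ∧ (g i).2 ≤ n := by
      intro i
      have := hg i
      rw [hA, Finset.mem_product, Finset.mem_Icc, Finset.mem_Icc] at this
      exact this.2
    rw [hB, Finset.mem_product, Finset.mem_Icc, Finset.mem_Icc]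
    have c1 : (∑ i, (g i).1) ≤ s * n := by
      calc (∑ i, (g i).1) ≤ ∑ _i : Fin s, n := Finset.sum_le_sum (fun i _ => (h1 i).2)
        _ = s * n := by rw [Finset.sum_const, Finset.card_univ, Fintype.card_fin,
              nsmul_eq_mul]
    have c2 : -(s * n : ℤ) ≤ ∑ i, (g i).1 := by
      calc -(s*n:ℤ) = ∑ _i : Fin s, (-n) := by
            rw [Finset.sum_const, Finset.card_univ, Fintype.card_fin, nsmul_eq_mul]; ring
        _ ≤ ∑ i, (g i).1 := Finset.sum_le_sum (fun i _ => (h1 i).1)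
    have c3 : (∑ i, (g i).2) ≤ s * n := by
      calc (∑ i, (g i).2) ≤ ∑ _i : Fin s, n := Finset.sum_le_sum (fun i _ => (h2 i).2)
        _ = s * n := by rw [Finset.sum_const, Finset.card_univ, Fintype.card_fin,
              nsmul_eq_mul]
    have c4 : -(s * n : ℤ) ≤ ∑ i, (g i).2 := by
      calc -(s*n:ℤ) = ∑ _i : Fin s, (-n) := by
            rw [Finset.sum_const, Finset.card_univ, Fintype.card_fin, nsmul_eq_mul]; ring
        _ ≤ ∑ i, (g i).2 := Finset.sum_le_sum (fun i _ => (h2 i).1)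
    exact ⟨⟨c2, c1⟩, ⟨c4, c3⟩⟩
  have hrep : ∀ ξ η : ℝ, SN N α ξ η ^ s = ∑ q ∈ B, a q * e (ξ * q.1 + η * q.2) := by
    intro ξ η
    rw [SN_eq N α ξ η]
    have hpow : (∑ p ∈ A, coef α p * e (ξ * p.1 + η * p.2)) ^ s
        = ∏ _i : Fin s, (∑ p ∈ A, coef α p * e (ξ * p.1 + η * p.2)) := by
      rw [Finset.prod_const, Finset.card_univ, Fintype.card_fin]
    rw [hpow, Finset.prod_univ_sum]
    have hsplit : ∀ g : Fin s → ℤ × ℤ,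
        (∏ i, (coef α (g i) * e (ξ * ((g i).1 : ℝ) + η * ((g i).2 : ℝ))))
        = (∏ i, coef α (g i)) * e (ξ * ((key g).1 : ℝ) + η * ((key g).2 : ℝ)) := by
      intro g
      rw [Finset.prod_mul_distrib]
      congr 1
      rw [← e_sum]
      congr 1
      rw [Finset.sum_add_distrib, ← Finset.mul_sum, ← Finset.mul_sum, hkey]
      push_cast
      ring
    simp only [hsplit]
    rw [← Finset.sum_fiberwise_of_maps_to hmaps
      (fun g => (∏ i, coef α (g i)) * e (ξ * ((key g).1 : ℝ) + η * ((key g).2 : ℝ)))]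
    refine Finset.sum_congr rfl fun q hq => ?_
    rw [ha, Finset.sum_mul]
    refine Finset.sum_congr rfl fun g hg => ?_
    have hkg : key g = q := (Finset.mem_filter.1 hg).2
    rw [hkg]
  have hnormrep : ∀ ξ η : ℝ,
      ‖∑ q ∈ B, a q * e (ξ * q.1 + η * q.2)‖ ^ 2 = ‖SN N α ξ η‖ ^ (2 * s) := by
    intro ξ η
    rw [← hrep ξ η, norm_pow, ← pow_mul, mul_comm s 2]
  -- Cauchy–Schwarz step
  have hCS : ‖SN N α ξ₀ η₀‖ ^ (2 * s) ≤ (B.card : ℝ) * ∑ q ∈ B, ‖a q‖ ^ 2 := by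
    rw [← hnormrep ξ₀ η₀]
    have h2 : ‖∑ q ∈ B, a q * e (ξ₀ * q.1 + η₀ * q.2)‖ ≤ ∑ q ∈ B, ‖a q‖ := by
      calc ‖∑ q ∈ B, a q * e (ξ₀ * q.1 + η₀ * q.2)‖
          ≤ ∑ q ∈ B, ‖a q * e (ξ₀ * q.1 + η₀ * q.2)‖ := norm_sum_le _ _
        _ = ∑ q ∈ B, ‖a q‖ := by
            refine Finset.sum_congr rfl fun q _ => ?_
            rw [norm_mul, e_norm, mul_one]
    calc ‖∑ q ∈ B, a q * e (ξ₀ * q.1 + η₀ * q.2)‖ ^ 2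
        ≤ (∑ q ∈ B, ‖a q‖) ^ 2 := by
          apply pow_le_pow_left₀ (norm_nonneg _) h2
      _ ≤ (B.card : ℝ) * ∑ q ∈ B, ‖a q‖ ^ 2 := sq_sum_le_card_mul_sum_sq
  have hpars : (∑ q ∈ B, ‖a q‖ ^ 2)
      = ∫ ξ in Set.Icc (0:ℝ) 1, ∫ η in Set.Icc (0:ℝ) 1, ‖SN N α ξ η‖ ^ (2 * s) := by
    rw [← parseval B a]
    refine MeasureTheory.integral_congr_ae (Filter.Eventually.of_forall fun ξ => ?_)
    exact MeasureTheory.integral_congr_ae (Filter.Eventually.of_forall fun η =>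
      (hnormrep ξ η))
  have hsumsq_nonneg : 0 ≤ ∑ q ∈ B, ‖a q‖ ^ 2 :=
    Finset.sum_nonneg fun q _ => sq_nonneg _
  have hcard : (B.card : ℝ) ≤ (3 * s * N) ^ 2 := by
    have hsn : (0:ℤ) ≤ s * n := mul_nonneg (by positivity) (by omega)
    have hIcc : ((Finset.Icc (-(s * n) : ℤ) (s * n)).card : ℝ) = 2*(s:ℝ)*(n:ℝ) + 1 := by
      rw [Int.card_Icc]
      have : ((s * n : ℤ) + 1 - -(s * n)).toNat = 2 * (s * n).toNat + 1 := by omega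
      rw [this]
      have h2' : ((((s:ℤ) * n).toNat : ℕ) : ℝ) = (s:ℝ) * (n:ℝ) := by
        have h3 := Int.toNat_of_nonneg hsn
        exact_mod_cast congrArg (fun z : ℤ => (z : ℝ)) h3
      push_cast
      rw [h2']
      ring
    rw [hB, Finset.card_product]
    push_cast
    rw [hIcc]
    have h1' : (1:ℝ) ≤ (s:ℝ) * N := by
      have : (1:ℝ) ≤ (s:ℝ) := by exact_mod_cast hs
      nlinarith
    have hb : 2*(s:ℝ)*(n:ℝ) + 1 ≤ 3 * s * N := by
      have hsn' : (s:ℝ) * n ≤ (s:ℝ) * N := by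
        apply mul_le_mul_of_nonneg_left hnN (by positivity)
      nlinarith
    have hpos : (0:ℝ) ≤ 2*(s:ℝ)*(n:ℝ) + 1 := by
      have : (0:ℝ) ≤ (n:ℝ) := by exact_mod_cast (by omega : (0:ℤ) ≤ n)
      positivity
    calc (2*(s:ℝ)*(n:ℝ) + 1) * (2*(s:ℝ)*(n:ℝ) + 1) ≤ (3*s*N) * (3*s*N) := by
          apply mul_le_mul hb hb hpos (by nlinarith)
      _ = (3 * s * N)^2 := by ring
  calc ‖SN N α ξ₀ η₀‖ ^ (2 * s) ≤ (B.card : ℝ) * ∑ q ∈ B, ‖a q‖ ^ 2 := hCS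
    _ ≤ (3 * s * N) ^ 2 * ∑ q ∈ B, ‖a q‖ ^ 2 :=
        mul_le_mul_of_nonneg_right hcard hsumsq_nonneg
    _ = (3 * s * N) ^ 2 *
          ∫ ξ in Set.Icc (0:ℝ) 1, ∫ η in Set.Icc (0:ℝ) 1, ‖SN N α ξ η‖ ^ (2 * s) := by
        rw [hpars]

lemma ofReal_norm_pow (z : ℂ) (m : ℕ) :
    ENNReal.ofReal (‖z‖ ^ m) = (‖z‖₊ : ℝ≥0∞) ^ m := by
  rw [ENNReal.ofReal_pow (norm_nonneg z), ofReal_norm, enorm_eq_nnnorm]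

lemma lower_bound (s : ℕ) (N : ℝ) (α : Fin 3 → ℝ) :
    ENNReal.ofReal (∫ ξ in Set.Icc (0:ℝ) 1, ∫ η in Set.Icc (0:ℝ) 1, ‖SN N α ξ η‖ ^ (2 * s))
    ≤ ∫⁻ ξ in Set.Icc (0:ℝ) 1, ∫⁻ η in Set.Icc (0:ℝ) 1,
        (‖SN N α ξ η‖₊ : ℝ≥0∞) ^ (2 * s) := by
  classical
  set A : Finset (ℤ × ℤ) := Finset.Icc (-⌊N⌋) ⌊N⌋ ×ˢ Finset.Icc (-⌊N⌋) ⌊N⌋ with hA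
  set f : ℝ × ℝ → ℝ := fun p => ‖SN N α p.1 p.2‖ ^ (2 * s) with hf
  have hfF : f = fun p : ℝ × ℝ =>
      ‖∑ q ∈ A, coef α q * e (p.1 * q.1 + p.2 * q.2)‖ ^ (2 * s) := by
    funext p
    rw [hf]
    simp only [SN_eq N α p.1 p.2]
    rfl
  have hcont : Continuous f := by
    rw [hfF]
    apply Continuous.pow
    apply Continuous.norm
    apply continuous_finset_sum
    intro q _
    exact continuous_const.mul (continuous_e.comp
      ((continuous_fst.mul continuous_const).add (continuous_snd.mul continuous_const)))
  have hnonneg : ∀ p : ℝ × ℝ, 0 ≤ f p := fun p => by rw [hf]; positivity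
  have hbound : ∀ p : ℝ × ℝ, f p ≤ (A.card : ℝ) ^ (2 * s) := by
    intro p
    rw [hfF]
    apply pow_le_pow_left₀ (norm_nonneg _)
    calc ‖∑ q ∈ A, coef α q * e (p.1 * q.1 + p.2 * q.2)‖
        ≤ ∑ q ∈ A, ‖coef α q * e (p.1 * q.1 + p.2 * q.2)‖ := norm_sum_le _ _
      _ = ∑ q ∈ A, (1:ℝ) := by
          refine Finset.sum_congr rfl fun q _ => ?_
          rw [norm_mul, e_norm, mul_one]
          exact e_norm _
      _ = (A.card : ℝ) := by rw [Finset.sum_const, nsmul_eq_mul, mul_one]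
  set M : ℝ := (A.card : ℝ) ^ (2 * s) with hM
  -- inner equality
  have hinner : ∀ ξ : ℝ,
      ENNReal.ofReal (∫ η in Set.Icc (0:ℝ) 1, f (ξ, η))
      = ∫⁻ η in Set.Icc (0:ℝ) 1, (‖SN N α ξ η‖₊ : ℝ≥0∞) ^ (2 * s) := by
    intro ξ
    have hint : IntegrableOn (fun η : ℝ => f (ξ, η)) (Set.Icc 0 1) volume :=
      (hcont.comp (Continuous.prodMk_right ξ)).integrableOn_Icc
    rw [MeasureTheory.ofReal_integral_eq_lintegral_ofReal hint
      (Filter.Eventually.of_forall fun η => hnonneg (ξ, η))]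
    refine lintegral_congr fun η => ?_
    rw [hf]
    exact ofReal_norm_pow _ _
  set u : ℝ → ℝ := fun ξ => ∫ η in Set.Icc (0:ℝ) 1, f (ξ, η) with hu
  have hu_nonneg : ∀ ξ, 0 ≤ u ξ := fun ξ =>
    MeasureTheory.integral_nonneg fun η => hnonneg (ξ, η)
  have hu_sm : MeasureTheory.StronglyMeasurable u :=
    (hcont.stronglyMeasurable).integral_prod_right'
  have hu_bdd : ∀ ξ, ‖u ξ‖ ≤ M := by
    intro ξ
    have h1 : u ξ ≤ M := by
      calc u ξ ≤ ∫ η in Set.Icc (0:ℝ) 1, M := by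
            apply MeasureTheory.integral_mono
              ((hcont.comp (Continuous.prodMk_right ξ)).integrableOn_Icc)
              (MeasureTheory.integrable_const M)
            exact fun η => hbound (ξ, η)
        _ = M * (volume (Set.Icc (0:ℝ) 1)).toReal := by
            rw [MeasureTheory.setIntegral_const, smul_eq_mul, mul_comm]
            rfl
        _ = M := by
            rw [Real.volume_Icc]
            norm_num
    rw [Real.norm_eq_abs, abs_of_nonneg (hu_nonneg ξ)]
    exact h1
  have hu_int : IntegrableOn u (Set.Icc 0 1) volume := by
    apply MeasureTheory.Integrable.mono' (MeasureTheory.integrable_const M)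
      hu_sm.aestronglyMeasurable
    exact Filter.Eventually.of_forall hu_bdd
  calc ENNReal.ofReal (∫ ξ in Set.Icc (0:ℝ) 1, u ξ)
      = ∫⁻ ξ in Set.Icc (0:ℝ) 1, ENNReal.ofReal (u ξ) :=
        MeasureTheory.ofReal_integral_eq_lintegral_ofReal hu_int
          (Filter.Eventually.of_forall hu_nonneg)
    _ ≤ ∫⁻ ξ in Set.Icc (0:ℝ) 1, ∫⁻ η in Set.Icc (0:ℝ) 1,
          (‖SN N α ξ η‖₊ : ℝ≥0∞) ^ (2 * s) := by
        apply lintegral_mono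
        intro ξ
        exact le_of_eq (hinner ξ)

/-- For every `s ∈ ℕ`, `s ≥ 1`, there is `C_s` such that for all `N ≥ 1`
and every measurable `𝔅 ⊆ 𝕋³` (the torus being modelled by `ℝ³`, phases being
`ℤ³`-periodic, with the sup over `ξ, η ∈ 𝕋` modelled as the sup over `ξ, η ∈ ℝ`):
`∫_𝔅 sup_{ξ,η} |S_N(α;ξ,η)|^{2s} dα ≤ C_s N² ∫_𝔅 ∫_{𝕋²} |S_N(α;ξ,η)|^{2s} dξ dη dα`. -/
theorem statement18 (s : ℕ) (hs : 1 ≤ s) :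
    ∃ C : ℝ≥0, 0 < C ∧ ∀ (N : ℝ), 1 ≤ N → ∀ B : Set (Fin 3 → ℝ), MeasurableSet B →
      (∫⁻ α in B, ⨆ (ξ : ℝ) (η : ℝ), (‖SN N α ξ η‖₊ : ℝ≥0∞) ^ (2 * s)) ≤
        C * ENNReal.ofReal (N ^ 2) *
          ∫⁻ α in B, ∫⁻ ξ in Set.Icc (0 : ℝ) 1, ∫⁻ η in Set.Icc (0 : ℝ) 1,
            (‖SN N α ξ η‖₊ : ℝ≥0∞) ^ (2 * s) := by
  refine ⟨9 * (s : ℝ≥0) ^ 2, by positivity, ?_⟩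
  intro N hN B hB
  set C : ℝ≥0 := 9 * (s : ℝ≥0) ^ 2 with hC
  set K : ℝ≥0∞ := (C : ℝ≥0∞) * ENNReal.ofReal (N ^ 2) with hK
  have hCoe : ENNReal.ofReal ((3 * (s:ℝ) * N) ^ 2) ≤ K := by
    have heq : ((3 * (s:ℝ) * N) ^ 2) = (9 * (s:ℝ)^2) * N ^ 2 := by ring
    rw [heq, ENNReal.ofReal_mul (by positivity)]
    have h9 : ENNReal.ofReal (9 * (s:ℝ)^2) = (C : ℝ≥0∞) := by
      rw [hC]
      rw [show (9 * (s:ℝ)^2) = ((9 * (s:ℝ≥0)^2 : ℝ≥0) : ℝ) by push_cast; ring]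
      exact ENNReal.ofReal_coe_nnreal
    rw [h9, hK]
  have hpoint : ∀ α : Fin 3 → ℝ,
      (⨆ (ξ : ℝ) (η : ℝ), (‖SN N α ξ η‖₊ : ℝ≥0∞) ^ (2 * s)) ≤
        K * ∫⁻ ξ in Set.Icc (0 : ℝ) 1, ∫⁻ η in Set.Icc (0 : ℝ) 1,
          (‖SN N α ξ η‖₊ : ℝ≥0∞) ^ (2 * s) := by
    intro α
    refine iSup_le fun ξ₀ => iSup_le fun η₀ => ?_
    have h1 : (‖SN N α ξ₀ η₀‖₊ : ℝ≥0∞) ^ (2 * s)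
        = ENNReal.ofReal (‖SN N α ξ₀ η₀‖ ^ (2 * s)) := (ofReal_norm_pow _ _).symm
    rw [h1]
    calc ENNReal.ofReal (‖SN N α ξ₀ η₀‖ ^ (2 * s))
        ≤ ENNReal.ofReal ((3 * (s:ℝ) * N) ^ 2 *
            ∫ ξ in Set.Icc (0:ℝ) 1, ∫ η in Set.Icc (0:ℝ) 1, ‖SN N α ξ η‖ ^ (2 * s)) :=
          ENNReal.ofReal_le_ofReal (pointwise_bound s hs N hN α ξ₀ η₀)
      _ = ENNReal.ofReal ((3 * (s:ℝ) * N) ^ 2) * ENNReal.ofReal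
            (∫ ξ in Set.Icc (0:ℝ) 1, ∫ η in Set.Icc (0:ℝ) 1, ‖SN N α ξ η‖ ^ (2 * s)) :=
          ENNReal.ofReal_mul (by positivity)
      _ ≤ K * ∫⁻ ξ in Set.Icc (0 : ℝ) 1, ∫⁻ η in Set.Icc (0 : ℝ) 1,
            (‖SN N α ξ η‖₊ : ℝ≥0∞) ^ (2 * s) :=
          mul_le_mul' hCoe (lower_bound s N α)
  calc (∫⁻ α in B, ⨆ (ξ : ℝ) (η : ℝ), (‖SN N α ξ η‖₊ : ℝ≥0∞) ^ (2 * s))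
      ≤ ∫⁻ α in B, K * ∫⁻ ξ in Set.Icc (0 : ℝ) 1, ∫⁻ η in Set.Icc (0 : ℝ) 1,
          (‖SN N α ξ η‖₊ : ℝ≥0∞) ^ (2 * s) := lintegral_mono hpoint
    _ = K * ∫⁻ α in B, ∫⁻ ξ in Set.Icc (0 : ℝ) 1, ∫⁻ η in Set.Icc (0 : ℝ) 1,
          (‖SN N α ξ η‖₊ : ℝ≥0∞) ^ (2 * s) := by
        apply lintegral_const_mul'
        rw [hK]
        exact ENNReal.mul_ne_top ENNReal.coe_ne_top ENNReal.ofReal_ne_top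
    _ = (C : ℝ≥0∞) * ENNReal.ofReal (N ^ 2) *
          ∫⁻ α in B, ∫⁻ ξ in Set.Icc (0 : ℝ) 1, ∫⁻ η in Set.Icc (0 : ℝ) 1,
            (‖SN N α ξ η‖₊ : ℝ≥0∞) ^ (2 * s) := by rw [hK]
end
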